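/- Let a = 2π/(ln 2 − γ), where γ is the Euler–Mascheroni constant, let c < 0 and θ₀ > 0. Consider the equation θ₀ + (θ₀(a+cε) − ε²)·(ln(1+λ)/(4π) − 1/a) = ε²/(a + cε + (θ₀(a+cε) − ε²)·(ln λ/(4π) − 1/a)) for λ > 0, and set λ_{a,ε} = exp[4π((θ₀/a − 1)(a − |c|ε) − ε²/a)/(θ₀(a − |c|ε) − ε²)]. Then there exist C > 0 and ε₀ > 0 such that for all 0 < ε < ε₀ the equation has exactly one solution λ_ε > 0; this solution lies in (λ_{a,ε}, ∞) and satisfies |λ_ε − e^{4π(1/a − 1/θ₀)}| ≤ Cε, and there are no solutions in (0, λ_{a,ε}). -/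

import Mathlib

private lemma aux_div_equiv {P Q e : ℝ} (hP : 0 < P) (he : 0 < e) :
    P = e / Q ↔ P * Q = e := by
  constructor
  · intro h
    rcases eq_or_ne Q 0 with h0 | h0
    · rw [h0, div_zero] at h
      exact absurd h hP.ne'
    · rw [h, div_mul_cancel₀ _ h0]
  · intro h
    have h0 : Q ≠ 0 := by
      intro h0
      rw [h0, mul_zero] at h
      exact absurd h he.ne
    rw [eq_div_iff h0]
    exact h

set_option maxHeartbeats 1000000 in
/-- d = 2, c < 0, θ₀ > 0: the negative-eigenvalue equation
`θ₀ + (θ₀(a+cε) − ε²)(ln(1+λ)/(4π) − 1/a)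
    = ε²/(a + cε + (θ₀(a+cε) − ε²)(ln λ/(4π) − 1/a))` (λ > 0)
has for small ε exactly one solution; it lies in `(λ_{a,ε}, ∞)` and is within
`Cε` of `e^{4π(1/a − 1/θ₀)}`, and there are no solutions in `(0, λ_{a,ε})`. -/
theorem isolated_eigenvalue_equation_d2 (a c θ₀ : ℝ)
    (ha : a = 2 * Real.pi / (Real.log 2 - Real.eulerMascheroniConstant))
    (hc : c < 0) (hθ : 0 < θ₀) :
    ∃ C > (0 : ℝ), ∃ ε₀ > (0 : ℝ), ∀ ε : ℝ, 0 < ε → ε < ε₀ →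
      (∃! lam : ℝ, 0 < lam ∧
        θ₀ + (θ₀ * (a + c * ε) - ε ^ 2) * (Real.log (1 + lam) / (4 * Real.pi) - 1 / a) =
          ε ^ 2 / (a + c * ε +
            (θ₀ * (a + c * ε) - ε ^ 2) * (Real.log lam / (4 * Real.pi) - 1 / a))) ∧
      (∀ lam : ℝ, 0 < lam →
        θ₀ + (θ₀ * (a + c * ε) - ε ^ 2) * (Real.log (1 + lam) / (4 * Real.pi) - 1 / a) =
          ε ^ 2 / (a + c * ε +
            (θ₀ * (a + c * ε) - ε ^ 2) * (Real.log lam / (4 * Real.pi) - 1 / a)) →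
        Real.exp (4 * Real.pi * ((θ₀ / a - 1) * (a - |c| * ε) - ε ^ 2 / a) /
            (θ₀ * (a - |c| * ε) - ε ^ 2)) < lam ∧
        |lam - Real.exp (4 * Real.pi * (1 / a - 1 / θ₀))| ≤ C * ε) := by
  have hπ : (0:ℝ) < Real.pi := Real.pi_pos
  have h4π : (0:ℝ) < 4 * Real.pi := by positivity
  have hγ : Real.eulerMascheroniConstant < Real.log 2 :=
    Real.eulerMascheroniConstant_lt_two_thirds.trans
      (by linarith [Real.log_two_gt_d9])
  have ha0 : 0 < a := by
    rw [ha]; exact div_pos (by linarith) (by linarith)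
  clear ha
  have habs : |c| = -c := abs_of_neg hc
  have hane : a ≠ 0 := ha0.ne'
  set L := Real.exp (4 * Real.pi * (1 / a - 1 / θ₀)) with hLdef
  have hL0 : 0 < L := Real.exp_pos _
  have hlogL : Real.log L = 4 * Real.pi * (1 / a - 1 / θ₀) := Real.log_exp _
  have hlog1L : 0 < Real.log (1 + L) := Real.log_pos (by linarith)
  set C := 8 * Real.pi * L / (θ₀ ^ 2 * a) + 1 with hCdef
  have hC0 : 0 < C := by positivity
  have hCa : C * (θ₀ ^ 2 * a) = 8 * Real.pi * L + θ₀ ^ 2 * a := by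
    rw [hCdef]; field_simp
  set m := θ₀ ^ 2 * a ^ 2 * Real.log (1 + L) / (128 * Real.pi ^ 2 * L) with hmdef
  have hm0 : 0 < m := by positivity
  have hmCval : m * C * (128 * Real.pi ^ 2 * L) = θ₀ ^ 2 * a ^ 2 * Real.log (1 + L) * C := by
    rw [hmdef]; field_simp
  refine ⟨C, hC0, min 1 (min (θ₀ * a / (2 * (θ₀ * |c| + 1))) (min (L / C) (m * C))),
    ?_, ?_⟩
  · have h1 : (0:ℝ) < θ₀ * |c| + 1 := by positivity
    exact lt_min one_pos (lt_min (by positivity) (lt_min (by positivity) (by positivity)))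
  intro ε hε hεlt
  simp only [lt_min_iff] at hεlt
  obtain ⟨hε1, hε2, hε3, hε4⟩ := hεlt
  -- rewrite |c| in the goal
  rw [show a - |c| * ε = a + c * ε by rw [habs]; ring]
  set A := a + c * ε with hAdef
  set K := θ₀ * A - ε ^ 2 with hKdef
  have hεsq : 0 < ε ^ 2 := pow_pos hε 2
  have hK : θ₀ * a / 2 ≤ K := by
    rw [hKdef, hAdef]
    rw [habs] at hε2
    have hd : (0:ℝ) < 2 * (θ₀ * -c + 1) := by nlinarith
    have h2 : ε * (2 * (θ₀ * -c + 1)) < θ₀ * a := by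
      have := (lt_div_iff₀ hd).mp hε2
      linarith
    nlinarith
  have hK0 : 0 < K := lt_of_lt_of_le (by positivity) hK
  have hKne : K ≠ 0 := hK0.ne'
  have hKA : K = θ₀ * A - ε ^ 2 := hKdef
  have hKa : K / a < θ₀ := by
    rw [div_lt_iff₀ ha0, hKdef, hAdef]
    have hcc : 0 < θ₀ * (-c) * ε := mul_pos (mul_pos hθ (neg_pos.mpr hc)) hε
    linarith
  set lam0 := Real.exp (4 * Real.pi * ((θ₀ / a - 1) * A - ε ^ 2 / a) / K) with hlam0def
  have hlam00 : 0 < lam0 := hlam0def ▸ Real.exp_pos _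
  have hlog0 : Real.log lam0 = 4 * Real.pi * (1 / a - A / K) := by
    rw [hlam0def, Real.log_exp, hKdef]
    have hKne' : θ₀ * A - ε ^ 2 ≠ 0 := by rw [← hKdef]; exact hKne
    field_simp
    ring
  have ht : Real.log lam0 = Real.log L - 4 * Real.pi * ε ^ 2 / (θ₀ * K) := by
    rw [hlog0, hlogL]
    have hθne : θ₀ ≠ 0 := hθ.ne'
    have e : A / K = 1 / θ₀ + ε ^ 2 / (θ₀ * K) := by
      rw [div_add_div _ _ hθne (mul_ne_zero hθne hKne),
        div_eq_div_iff hKne (mul_ne_zero hθne (mul_ne_zero hθne hKne)), hKdef]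
      ring
    rw [e]; ring
  have h5 : 1 / θ₀ < A / K := by
    rw [div_lt_div_iff₀ hθ hK0, hKdef]
    linarith
  -- from now on, treat everything as opaque
  clear_value lam0 K A m C L
  clear hCdef hmdef hAdef hKdef hlam0def hLdef
  -- basic positivity facts
  have hK4π : 0 < K / (4 * Real.pi) := div_pos hK0 h4π
  have hCε : 0 < C * ε := mul_pos hC0 hε
  have hlam1pos : 0 < L + C * ε := by linarith
  -- Q in factored form
  have hQform : ∀ x : ℝ, A + K * (Real.log x / (4 * Real.pi) - 1 / a)
      = K / (4 * Real.pi) * (Real.log x - Real.log lam0) := by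
    intro x
    rw [hlog0]
    field_simp
    ring
  -- positivity of P
  have hPpos : ∀ x : ℝ, 0 < x →
      0 < θ₀ + K * (Real.log (1 + x) / (4 * Real.pi) - 1 / a) := by
    intro x hx
    have hl : 0 < Real.log (1 + x) := Real.log_pos (by linarith)
    have he : K * (Real.log (1 + x) / (4 * Real.pi) - 1 / a)
        = K * (Real.log (1 + x) / (4 * Real.pi)) - K / a := by ring
    linarith [mul_pos hK0 (div_pos hl h4π), hKa]
  -- equation equivalence
  have key : ∀ x : ℝ, 0 < x →
      ((θ₀ + K * (Real.log (1 + x) / (4 * Real.pi) - 1 / a) =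
        ε ^ 2 / (A + K * (Real.log x / (4 * Real.pi) - 1 / a))) ↔
       (θ₀ + K * (Real.log (1 + x) / (4 * Real.pi) - 1 / a)) *
         (A + K * (Real.log x / (4 * Real.pi) - 1 / a)) = ε ^ 2) :=
    fun x hx => aux_div_equiv (hPpos x hx) hεsq
  -- monotonicity on [lam0, ∞)
  have hmono : ∀ x y : ℝ, lam0 ≤ x → x < y →
      (θ₀ + K * (Real.log (1 + x) / (4 * Real.pi) - 1 / a)) *
        (A + K * (Real.log x / (4 * Real.pi) - 1 / a)) <
      (θ₀ + K * (Real.log (1 + y) / (4 * Real.pi) - 1 / a)) *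
        (A + K * (Real.log y / (4 * Real.pi) - 1 / a)) := by
    intro x y hx hxy
    have hx0 : 0 < x := lt_of_lt_of_le hlam00 hx
    have hy0 : 0 < y := hx0.trans hxy
    have hQx : 0 ≤ A + K * (Real.log x / (4 * Real.pi) - 1 / a) := by
      rw [hQform]
      exact mul_nonneg hK4π.le (sub_nonneg.mpr (Real.log_le_log hlam00 hx))
    have hQxy : A + K * (Real.log x / (4 * Real.pi) - 1 / a) <
        A + K * (Real.log y / (4 * Real.pi) - 1 / a) := by
      rw [hQform, hQform]
      exact mul_lt_mul_of_pos_left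
        (sub_lt_sub_right (Real.log_lt_log hx0 hxy) _) hK4π
    have hPxy : θ₀ + K * (Real.log (1 + x) / (4 * Real.pi) - 1 / a) ≤
        θ₀ + K * (Real.log (1 + y) / (4 * Real.pi) - 1 / a) := by
      have hl := (Real.log_lt_log (show (0:ℝ) < 1 + x by linarith)
        (show 1 + x < 1 + y by linarith)).le
      have h2 : K * (Real.log (1 + x) / (4 * Real.pi)) ≤
          K * (Real.log (1 + y) / (4 * Real.pi)) :=
        mul_le_mul_of_nonneg_left (div_le_div_of_nonneg_right hl h4π.le) hK0.le
      have e1 : K * (Real.log (1 + x) / (4 * Real.pi) - 1 / a)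
          = K * (Real.log (1 + x) / (4 * Real.pi)) - K / a := by ring
      have e2 : K * (Real.log (1 + y) / (4 * Real.pi) - 1 / a)
          = K * (Real.log (1 + y) / (4 * Real.pi)) - K / a := by ring
      linarith
    have hPy : 0 < θ₀ + K * (Real.log (1 + y) / (4 * Real.pi) - 1 / a) := hPpos y hy0
    calc (θ₀ + K * (Real.log (1 + x) / (4 * Real.pi) - 1 / a)) *
          (A + K * (Real.log x / (4 * Real.pi) - 1 / a))
        ≤ (θ₀ + K * (Real.log (1 + y) / (4 * Real.pi) - 1 / a)) *
          (A + K * (Real.log x / (4 * Real.pi) - 1 / a)) :=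
          mul_le_mul_of_nonneg_right hPxy hQx
      _ < (θ₀ + K * (Real.log (1 + y) / (4 * Real.pi) - 1 / a)) *
          (A + K * (Real.log y / (4 * Real.pi) - 1 / a)) :=
          mul_lt_mul_of_pos_left hQxy hPy
  -- any solution is above lam0
  have hsolgt : ∀ z : ℝ, 0 < z →
      (θ₀ + K * (Real.log (1 + z) / (4 * Real.pi) - 1 / a)) *
        (A + K * (Real.log z / (4 * Real.pi) - 1 / a)) = ε ^ 2 → lam0 < z := by
    intro z hz hzeq
    have hPz := hPpos z hz
    have hQz : 0 < A + K * (Real.log z / (4 * Real.pi) - 1 / a) := by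
      by_contra h
      push_neg at h
      have := mul_nonpos_iff.mpr (Or.inl ⟨hPz.le, h⟩)
      rw [hzeq] at this
      linarith
    rw [hQform] at hQz
    have hΔ : 0 < Real.log z - Real.log lam0 := by
      by_contra h
      push_neg at h
      have := mul_nonpos_iff.mpr (Or.inl ⟨hK4π.le, h⟩)
      linarith
    exact (Real.log_lt_log_iff hlam00 hz).mp (by linarith)
  -- lam0 < L
  have hlam0L : lam0 < L := by
    have hlt : Real.log lam0 < Real.log L := by
      rw [hlog0, hlogL]
      exact mul_lt_mul_of_pos_left (sub_lt_sub_left h5 (1 / a)) h4π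
    exact (Real.log_lt_log_iff hlam00 hL0).mp hlt
  -- lam0 ≥ L - C ε
  have hlam0ge : L - C * ε ≤ lam0 := by
    have hform : lam0 = L * Real.exp (-(4 * Real.pi * ε ^ 2 / (θ₀ * K))) := by
      rw [← Real.exp_log hlam00, ht, sub_eq_add_neg, Real.exp_add, Real.exp_log hL0]
    have hexp : 1 - 4 * Real.pi * ε ^ 2 / (θ₀ * K) ≤
        Real.exp (-(4 * Real.pi * ε ^ 2 / (θ₀ * K))) := by
      have := Real.add_one_le_exp (-(4 * Real.pi * ε ^ 2 / (θ₀ * K)))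
      linarith
    have hθK : (0:ℝ) < θ₀ * K := mul_pos hθ hK0
    have hLt : L * (4 * Real.pi * ε ^ 2 / (θ₀ * K)) ≤ C * ε := by
      have p1 : C * ε * θ₀ * (θ₀ * a / 2) ≤ C * ε * θ₀ * K :=
        mul_le_mul_of_nonneg_left hK
          (mul_nonneg (mul_nonneg hC0.le hε.le) hθ.le)
      have p2 : C * ε * θ₀ * (θ₀ * a / 2) = 4 * Real.pi * L * ε + θ₀ ^ 2 * a * ε / 2 := by
        linear_combination (ε / 2) * hCa
      have p3 : 0 ≤ 4 * Real.pi * L * ε - 4 * Real.pi * L * ε ^ 2 := by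
        have h30 : (0:ℝ) ≤ 1 - ε := by linarith
        have := mul_nonneg (mul_nonneg (mul_nonneg (by norm_num : (0:ℝ) ≤ 4) hπ.le) hL0.le)
          (mul_nonneg hε.le h30)
        nlinarith [this]
      have p4 : 0 ≤ θ₀ ^ 2 * a * ε / 2 := by
        have := mul_nonneg (mul_nonneg (sq_nonneg θ₀) ha0.le) hε.le
        linarith
      have h6 : L * (4 * Real.pi * ε ^ 2) ≤ C * ε * (θ₀ * K) := by nlinarith [p1, p2, p3, p4]
      calc L * (4 * Real.pi * ε ^ 2 / (θ₀ * K)) = L * (4 * Real.pi * ε ^ 2) / (θ₀ * K) := by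
            ring
        _ ≤ C * ε := by rw [div_le_iff₀ hθK]; linarith [h6]
    calc L - C * ε ≤ L - L * (4 * Real.pi * ε ^ 2 / (θ₀ * K)) := by linarith
      _ = L * (1 - 4 * Real.pi * ε ^ 2 / (θ₀ * K)) := by ring
      _ ≤ L * Real.exp (-(4 * Real.pi * ε ^ 2 / (θ₀ * K))) :=
          mul_le_mul_of_nonneg_left hexp hL0.le
      _ = lam0 := hform.symm
  -- the right endpoint
  have hCεL : C * ε ≤ L := by
    have := (lt_div_iff₀ hC0).mp hε3
    linarith
  -- lower bound for Q at L + Cε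
  have hQ1 : K / (4 * Real.pi) * (C * ε / (2 * L)) ≤
      A + K * (Real.log (L + C * ε) / (4 * Real.pi) - 1 / a) := by
    rw [hQform]
    have hs1 : Real.log lam0 ≤ Real.log L := Real.log_le_log hlam00 hlam0L.le
    have hs3 : 1 - ((L + C * ε) / L)⁻¹ ≤ Real.log ((L + C * ε) / L) :=
      Real.one_sub_inv_le_log_of_pos (div_pos hlam1pos hL0)
    have hs4 : ((L + C * ε) / L)⁻¹ = L / (L + C * ε) := by
      rw [inv_div]
    have hs5 : 1 - L / (L + C * ε) = C * ε / (L + C * ε) := by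
      field_simp
      ring
    have hs6 : C * ε / (2 * L) ≤ C * ε / (L + C * ε) := by
      apply div_le_div_of_nonneg_left hCε.le hlam1pos
      linarith
    have hs7 : C * ε / (2 * L) ≤ Real.log (L + C * ε) - Real.log lam0 := by
      calc C * ε / (2 * L) ≤ C * ε / (L + C * ε) := hs6
        _ = 1 - L / (L + C * ε) := hs5.symm
        _ = 1 - ((L + C * ε) / L)⁻¹ := by rw [hs4]
        _ ≤ Real.log ((L + C * ε) / L) := hs3
        _ = Real.log (L + C * ε) - Real.log L := by
            rw [Real.log_div hlam1pos.ne' hL0.ne']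
        _ ≤ Real.log (L + C * ε) - Real.log lam0 := by linarith
    exact mul_le_mul_of_nonneg_left hs7 hK4π.le
  -- lower bound for P at L + Cε
  have hP1 : K * Real.log (1 + L) / (4 * Real.pi) ≤
      θ₀ + K * (Real.log (1 + (L + C * ε)) / (4 * Real.pi) - 1 / a) := by
    have hl : Real.log (1 + L) ≤ Real.log (1 + (L + C * ε)) :=
      Real.log_le_log (by linarith) (by linarith)
    have h2 : K * (Real.log (1 + L) / (4 * Real.pi)) ≤
        K * (Real.log (1 + (L + C * ε)) / (4 * Real.pi)) :=
      mul_le_mul_of_nonneg_left (div_le_div_of_nonneg_right hl h4π.le) hK0.le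
    have e1 : θ₀ + K * (Real.log (1 + (L + C * ε)) / (4 * Real.pi) - 1 / a)
        = (θ₀ - K / a) + K * (Real.log (1 + (L + C * ε)) / (4 * Real.pi)) := by ring
    have e2 : K * Real.log (1 + L) / (4 * Real.pi)
        = K * (Real.log (1 + L) / (4 * Real.pi)) := by ring
    linarith
  -- main estimate : ε² ≤ h (L + Cε)
  have hmain : ε ^ 2 ≤
      (θ₀ + K * (Real.log (1 + (L + C * ε)) / (4 * Real.pi) - 1 / a)) *
        (A + K * (Real.log (L + C * ε) / (4 * Real.pi) - 1 / a)) := by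
    have hQpos : 0 ≤ K / (4 * Real.pi) * (C * ε / (2 * L)) :=
      mul_nonneg hK4π.le (div_nonneg hCε.le (by linarith))
    have hPpos1 : 0 ≤ θ₀ + K * (Real.log (1 + (L + C * ε)) / (4 * Real.pi) - 1 / a) :=
      (hPpos _ hlam1pos).le
    have hprod : (K * Real.log (1 + L) / (4 * Real.pi)) *
        (K / (4 * Real.pi) * (C * ε / (2 * L))) ≤
        (θ₀ + K * (Real.log (1 + (L + C * ε)) / (4 * Real.pi) - 1 / a)) *
          (A + K * (Real.log (L + C * ε) / (4 * Real.pi) - 1 / a)) :=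
      mul_le_mul hP1 hQ1 hQpos hPpos1
    have hpq : (K * Real.log (1 + L) / (4 * Real.pi)) *
        (K / (4 * Real.pi) * (C * ε / (2 * L))) =
        K ^ 2 * Real.log (1 + L) * (C * ε) / (32 * Real.pi ^ 2 * L) := by
      field_simp
      ring
    have h128 : (0:ℝ) < 128 * Real.pi ^ 2 * L :=
      mul_pos (mul_pos (by norm_num) (pow_pos hπ 2)) hL0
    have h32 : (0:ℝ) < 32 * Real.pi ^ 2 * L :=
      mul_pos (mul_pos (by norm_num) (pow_pos hπ 2)) hL0
    have hε4' : ε * (128 * Real.pi ^ 2 * L) < θ₀ ^ 2 * a ^ 2 * Real.log (1 + L) * C := by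
      have := mul_lt_mul_of_pos_right hε4 h128
      rw [hmCval] at this
      linarith
    have hθa : (0:ℝ) ≤ θ₀ * a / 2 := by
      have := mul_pos hθ ha0
      linarith
    have hKK : θ₀ ^ 2 * a ^ 2 ≤ 4 * K ^ 2 := by
      nlinarith [mul_le_mul hK hK hθa hK0.le]
    have hfin : ε ^ 2 * (32 * Real.pi ^ 2 * L) ≤ K ^ 2 * Real.log (1 + L) * (C * ε) := by
      have q1 := mul_le_mul_of_nonneg_right hε4'.le hε.le
      have q2 := mul_le_mul_of_nonneg_right hKK
        (show 0 ≤ Real.log (1 + L) * C * ε from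
          mul_nonneg (mul_nonneg hlog1L.le hC0.le) hε.le)
      linarith [q1, q2]
    have hfin2 : ε ^ 2 ≤ K ^ 2 * Real.log (1 + L) * (C * ε) / (32 * Real.pi ^ 2 * L) := by
      rw [le_div_iff₀ h32]
      exact hfin
    linarith [hprod, hpq ▸ hfin2]
  -- continuity
  have hcont : ContinuousOn (fun x : ℝ =>
      (θ₀ + K * (Real.log (1 + x) / (4 * Real.pi) - 1 / a)) *
        (A + K * (Real.log x / (4 * Real.pi) - 1 / a))) (Set.Icc lam0 (L + C * ε)) := by
    apply ContinuousOn.mul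
    · apply ContinuousOn.add continuousOn_const
      apply ContinuousOn.mul continuousOn_const
      apply ContinuousOn.sub _ continuousOn_const
      apply ContinuousOn.div_const
      exact ContinuousOn.log (by fun_prop)
        (fun x hx => by have := hx.1; nlinarith [hlam00])
    · apply ContinuousOn.add continuousOn_const
      apply ContinuousOn.mul continuousOn_const
      apply ContinuousOn.sub _ continuousOn_const
      apply ContinuousOn.div_const
      exact ContinuousOn.log continuousOn_id
        (fun x hx => by have := hx.1; exact (lt_of_lt_of_le hlam00 this).ne')
  -- value at lam0 is 0
  have hf0 : (θ₀ + K * (Real.log (1 + lam0) / (4 * Real.pi) - 1 / a)) *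
      (A + K * (Real.log lam0 / (4 * Real.pi) - 1 / a)) = 0 := by
    rw [hQform, sub_self, mul_zero, mul_zero]
  -- existence via IVT
  have hle : lam0 ≤ L + C * ε := by linarith
  have hIVT := intermediate_value_Icc hle hcont
  have hmem : ε ^ 2 ∈ Set.Icc
      ((θ₀ + K * (Real.log (1 + lam0) / (4 * Real.pi) - 1 / a)) *
        (A + K * (Real.log lam0 / (4 * Real.pi) - 1 / a)))
      ((θ₀ + K * (Real.log (1 + (L + C * ε)) / (4 * Real.pi) - 1 / a)) *
        (A + K * (Real.log (L + C * ε) / (4 * Real.pi) - 1 / a))) := by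
    constructor
    · rw [hf0]; exact hεsq.le
    · exact hmain
  obtain ⟨lam, hlamI, hlamEq⟩ := hIVT hmem
  have hlampos : 0 < lam := lt_of_lt_of_le hlam00 hlamI.1
  simp only at hlamEq
  -- final assembly
  constructor
  · refine ⟨lam, ⟨hlampos, (key lam hlampos).mpr hlamEq⟩, ?_⟩
    intro y hy
    obtain ⟨hy0, hyE⟩ := hy
    have hyv : (θ₀ + K * (Real.log (1 + y) / (4 * Real.pi) - 1 / a)) *
        (A + K * (Real.log y / (4 * Real.pi) - 1 / a)) = ε ^ 2 := (key y hy0).mp hyE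
    have hygt := hsolgt y hy0 hyv
    have hlamgt := hsolgt lam hlampos hlamEq
    rcases lt_trichotomy y lam with h | h | h
    · exfalso
      have := hmono y lam hygt.le h
      rw [hyv, hlamEq] at this
      exact lt_irrefl _ this
    · exact h
    · exfalso
      have := hmono lam y hlamgt.le h
      rw [hyv, hlamEq] at this
      exact lt_irrefl _ this
  · intro lam' hlam'0 hE
    have hval : (θ₀ + K * (Real.log (1 + lam') / (4 * Real.pi) - 1 / a)) *
        (A + K * (Real.log lam' / (4 * Real.pi) - 1 / a)) = ε ^ 2 := (key lam' hlam'0).mp hE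
    have hgt := hsolgt lam' hlam'0 hval
    refine ⟨hgt, ?_⟩
    rw [abs_le]
    constructor
    · linarith
    · by_contra h
      push_neg at h
      have h' : L + C * ε < lam' := by linarith
      have := hmono (L + C * ε) lam' (by linarith) h'
      rw [hval] at this
      linarith
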